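/- Let D = [Φ Ψ] be a dictionary consisting of two orthonormal bases of ℂ^N with coherence μ. Then every set of k columns of D with k ≤ 2/μ − 1 is linearly independent; equivalently, the Kruskal rank of D satisfies σ(D) ≥ 2/μ − 1. -/

import Mathlib

private lemma stmt5_arith (μ A B k1 k2 k : ℝ) (hμpos : 0 < μ) (hμ1 : μ ≤ 1)
    (hApos : 0 < A) (hBpos : 0 < B)
    (hAle : A ≤ k1 * (μ * B)) (hBle : B ≤ k2 * (μ * A))
    (hcard : k1 + k2 = k) (hk1 : 0 ≤ k1) (hk2 : 0 ≤ k2)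
    (hS : k ≤ 2 / μ - 1) : False := by
  have h2μ : μ * (2 / μ) = 2 := by field_simp
  have hk : μ * k ≤ 2 - μ := by
    nlinarith [mul_le_mul_of_nonneg_left hS hμpos.le]
  have h1 : A ≤ k1 * k2 * μ * μ * A := by
    nlinarith [mul_le_mul_of_nonneg_left hBle (mul_nonneg hk1 hμpos.le), hAle]
  have h2 : (1 : ℝ) ≤ k1 * k2 * μ * μ := by nlinarith [h1, hApos]
  subst hcard
  have hknn : 0 ≤ μ * (k1 + k2) := by positivity
  nlinarith [h2, hk, hμ1, hμpos,
    mul_nonneg (sq_nonneg (k1 - k2)) (sq_nonneg μ),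
    mul_self_le_mul_self hknn hk]

open Finset in
/-- Kruskal-rank bound for a two-orthonormal-bases dictionary: every set of at most
`2/μ − 1` columns of `D = [Φ Ψ]` is linearly independent. -/
theorem stmt5 {N : ℕ} (hN : 0 < N)
    (φ ψ : OrthonormalBasis (Fin N) ℂ (EuclideanSpace ℂ (Fin N)))
    (μ : ℝ)
    (hμ : μ = ⨆ ℓ : Fin N, ⨆ r : Fin N, ‖(inner ℂ (φ ℓ) (ψ r) : ℂ)‖)
    (d : Fin N ⊕ Fin N → EuclideanSpace ℂ (Fin N))
    (hd₁ : ∀ ℓ, d (Sum.inl ℓ) = φ ℓ) (hd₂ : ∀ ℓ, d (Sum.inr ℓ) = ψ ℓ) :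
    ∀ S : Finset (Fin N ⊕ Fin N), ((S.card : ℝ) ≤ 2 / μ - 1) →
      LinearIndependent ℂ (fun i : {i // i ∈ S} => d i.1) := by
  haveI : Nonempty (Fin N) := ⟨⟨0, hN⟩⟩
  intro S hS
  -- coherence bounds
  have hbound : ∀ ℓ r, ‖(inner ℂ (φ ℓ) (ψ r) : ℂ)‖ ≤ μ := by
    intro ℓ r
    rw [hμ]
    have h1 : ‖(inner ℂ (φ ℓ) (ψ r) : ℂ)‖ ≤ ⨆ r' : Fin N, ‖(inner ℂ (φ ℓ) (ψ r') : ℂ)‖ :=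
      le_ciSup (f := fun r' : Fin N => ‖(inner ℂ (φ ℓ) (ψ r') : ℂ)‖)
        (Set.Finite.bddAbove (Set.finite_range _)) r
    exact h1.trans (le_ciSup
      (f := fun ℓ' : Fin N => ⨆ r' : Fin N, ‖(inner ℂ (φ ℓ') (ψ r') : ℂ)‖)
      (Set.Finite.bddAbove (Set.finite_range _)) ℓ)
  have hμ1 : μ ≤ 1 := by
    rw [hμ]
    refine ciSup_le fun ℓ => ciSup_le fun r => ?_
    calc ‖(inner ℂ (φ ℓ) (ψ r) : ℂ)‖ ≤ ‖φ ℓ‖ * ‖ψ r‖ := norm_inner_le_norm _ _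
    _ = 1 := by rw [φ.orthonormal.1, ψ.orthonormal.1]; ring
  have hμpos : 0 < μ := by
    -- some inner product is nonzero
    have h0 : ∃ ℓ, (inner ℂ (φ ℓ) (ψ ⟨0, hN⟩) : ℂ) ≠ 0 := by
      by_contra h
      push_neg at h
      have h2 := φ.sum_repr' (ψ ⟨0, hN⟩)
      rw [Finset.sum_congr rfl (fun ℓ _ => by rw [h ℓ, zero_smul]),
        Finset.sum_const_zero] at h2
      have : ‖ψ ⟨0, hN⟩‖ = 1 := ψ.orthonormal.1 _
      rw [← h2, norm_zero] at this
      norm_num at this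
    obtain ⟨ℓ, hℓ⟩ := h0
    exact lt_of_lt_of_le (norm_pos_iff.2 hℓ) (hbound ℓ _)
  rw [Fintype.linearIndependent_iff]
  intro g hg j
  by_contra hgj
  classical
  set c : Fin N ⊕ Fin N → ℂ := fun i => if h : i ∈ S then g ⟨i, h⟩ else 0 with hc
  set a : Fin N → ℂ := fun ℓ => c (Sum.inl ℓ) with ha
  set b : Fin N → ℂ := fun r => c (Sum.inr r) with hb
  -- the linear relation
  have key : ∑ ℓ, a ℓ • φ ℓ + ∑ r, b r • ψ r = 0 := by
    have h1 : ∑ i : Fin N ⊕ Fin N, c i • d i = ∑ i ∈ S, c i • d i := by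
      refine (Finset.sum_subset S.subset_univ ?_).symm
      intro i _ hi
      rw [hc]; simp [hi]
    have h2 : ∑ i ∈ S, c i • d i = ∑ i : {i // i ∈ S}, g i • d i.1 := by
      rw [← Finset.sum_attach S (fun i => c i • d i)]
      refine Finset.sum_congr rfl fun i _ => ?_
      rw [hc]; simp [i.2]
    rw [Fintype.sum_sum_type] at h1
    simp only [hd₁, hd₂] at h1
    simp only [ha, hb]
    rw [h1, h2, hg]
  have hxy : ∑ ℓ, a ℓ • φ ℓ = -∑ r, b r • ψ r := by
    rw [eq_neg_iff_add_eq_zero]; exact key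
  have hyx : ∑ r, b r • ψ r = -∑ ℓ, a ℓ • φ ℓ := by
    rw [eq_neg_iff_add_eq_zero, add_comm]; exact key
  -- coefficient formulas
  have hA : ∀ ℓ, a ℓ = -∑ r, b r * (inner ℂ (φ ℓ) (ψ r) : ℂ) := by
    intro ℓ
    have := φ.orthonormal.inner_right_fintype a ℓ
    rw [hxy] at this
    rw [← this, inner_neg_right, inner_sum]
    simp [inner_smul_right]
  have hB : ∀ r, b r = -∑ ℓ, a ℓ * (inner ℂ (ψ r) (φ ℓ) : ℂ) := by
    intro r
    have := ψ.orthonormal.inner_right_fintype b r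
    rw [hyx] at this
    rw [← this, inner_neg_right, inner_sum]
    simp [inner_smul_right]
  set A : ℝ := ∑ ℓ, ‖a ℓ‖ with hAdef
  set B : ℝ := ∑ r, ‖b r‖ with hBdef
  have haT : ∀ ℓ, ℓ ∉ S.toLeft → a ℓ = 0 := by
    intro ℓ hℓ
    rw [Finset.mem_toLeft] at hℓ
    simp only [ha, hb, hc]
    simp [hℓ]
  have hbT : ∀ r, r ∉ S.toRight → b r = 0 := by
    intro r hr
    rw [Finset.mem_toRight] at hr
    simp only [ha, hb, hc]
    simp [hr]
  -- pointwise bounds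
  have hptA : ∀ ℓ, ‖a ℓ‖ ≤ μ * B := by
    intro ℓ
    rw [hA ℓ, norm_neg]
    calc ‖∑ r, b r * (inner ℂ (φ ℓ) (ψ r) : ℂ)‖ ≤ ∑ r, ‖b r * (inner ℂ (φ ℓ) (ψ r) : ℂ)‖ :=
          norm_sum_le _ _
      _ ≤ ∑ r, ‖b r‖ * μ := by
          refine Finset.sum_le_sum fun r _ => ?_
          rw [norm_mul]
          exact mul_le_mul_of_nonneg_left (hbound ℓ r) (norm_nonneg _)
      _ = μ * B := by rw [← Finset.sum_mul]; ring
  have hptB : ∀ r, ‖b r‖ ≤ μ * A := by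
    intro r
    rw [hB r, norm_neg]
    calc ‖∑ ℓ, a ℓ * (inner ℂ (ψ r) (φ ℓ) : ℂ)‖ ≤ ∑ ℓ, ‖a ℓ * (inner ℂ (ψ r) (φ ℓ) : ℂ)‖ :=
          norm_sum_le _ _
      _ ≤ ∑ ℓ, ‖a ℓ‖ * μ := by
          refine Finset.sum_le_sum fun ℓ _ => ?_
          rw [norm_mul, norm_inner_symm]
          exact mul_le_mul_of_nonneg_left (hbound ℓ r) (norm_nonneg _)
      _ = μ * A := by rw [← Finset.sum_mul]; ring
  -- aggregate bounds
  have hAsum : A = ∑ ℓ ∈ S.toLeft, ‖a ℓ‖ := by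
    rw [hAdef]
    refine (Finset.sum_subset S.toLeft.subset_univ ?_).symm
    intro ℓ _ hℓ; rw [haT ℓ hℓ, norm_zero]
  have hBsum : B = ∑ r ∈ S.toRight, ‖b r‖ := by
    rw [hBdef]
    refine (Finset.sum_subset S.toRight.subset_univ ?_).symm
    intro r _ hr; rw [hbT r hr, norm_zero]
  have hAle : A ≤ (S.toLeft.card : ℝ) * (μ * B) := by
    rw [hAsum]
    calc ∑ ℓ ∈ S.toLeft, ‖a ℓ‖ ≤ ∑ _ℓ ∈ S.toLeft, μ * B := Finset.sum_le_sum fun ℓ _ => hptA ℓ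
      _ = (S.toLeft.card : ℝ) * (μ * B) := by rw [Finset.sum_const, nsmul_eq_mul]
  have hBle : B ≤ (S.toRight.card : ℝ) * (μ * A) := by
    rw [hBsum]
    calc ∑ r ∈ S.toRight, ‖b r‖ ≤ ∑ _r ∈ S.toRight, μ * A := Finset.sum_le_sum fun r _ => hptB r
      _ = (S.toRight.card : ℝ) * (μ * A) := by rw [Finset.sum_const, nsmul_eq_mul]
  -- both a and b are nonzero
  have hane : a ≠ 0 ∧ b ≠ 0 := by
    have hcne : c j.1 ≠ 0 := by rw [hc]; simpa [j.2] using hgj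
    have himp1 : a = 0 → b = 0 := by
      intro h0
      have : ∑ r, b r • ψ r = 0 := by
        rw [hyx, h0]; simp
      have hli := ψ.orthonormal.linearIndependent
      rw [Fintype.linearIndependent_iff] at hli
      exact funext (hli b this)
    have himp2 : b = 0 → a = 0 := by
      intro h0
      have : ∑ ℓ, a ℓ • φ ℓ = 0 := by
        rw [hxy, h0]; simp
      have hli := φ.orthonormal.linearIndependent
      rw [Fintype.linearIndependent_iff] at hli
      exact funext (hli a this)
    rcases j with ⟨i, hi⟩
    cases i with
    | inl ℓ =>
      have : a ℓ ≠ 0 := hcne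
      have ha0 : a ≠ 0 := fun h => this (by rw [h]; rfl)
      exact ⟨ha0, fun h => ha0 (himp2 h)⟩
    | inr r =>
      have : b r ≠ 0 := hcne
      have hb0 : b ≠ 0 := fun h => this (by rw [h]; rfl)
      exact ⟨fun h => hb0 (himp1 h), hb0⟩
  have hApos : 0 < A := by
    obtain ⟨ℓ, hℓ⟩ := Function.ne_iff.1 hane.1
    exact Finset.sum_pos' (fun i _ => norm_nonneg _)
      ⟨ℓ, Finset.mem_univ _, norm_pos_iff.2 hℓ⟩
  have hBpos : 0 < B := by
    obtain ⟨r, hr⟩ := Function.ne_iff.1 hane.2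
    exact Finset.sum_pos' (fun i _ => norm_nonneg _)
      ⟨r, Finset.mem_univ _, norm_pos_iff.2 hr⟩
  -- cardinality
  have hcard : (S.toLeft.card : ℝ) + S.toRight.card = S.card := by
    rw [← Nat.cast_add, Finset.card_toLeft_add_card_toRight]
  exact stmt5_arith μ A B _ _ _ hμpos hμ1 hApos hBpos hAle hBle hcard
    (Nat.cast_nonneg _) (Nat.cast_nonneg _) hS
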